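/- Let (λ,p) ∈ ℤ^n_{++} × ℤ. Define for 1 ≤ i ≤ n−1 the elements W_i^+ = e at index ((λ_1+1,…,λ_{i−1}+1, λ_{i+1},…,λ_{n−1}, λ_n), p+λ_i−i+1) with value c_i^+ = −p+λ_i−i+2n, and W_i^− = e at index ((λ_1+1,…,λ_{i−1}+1, λ_{i+1},…,λ_{n−1}, −λ_n), p−λ_i−2n+i+1) with value c_i^− = −p−λ_i+i; and for i = n: W_n^+ = e at index ((λ_1+1,…,λ_{n−2}+1, λ_{n−1}+1), p+λ_n−n+1) with value c_n^+ = −p+λ_n+n, and W_n^− = e at index ((λ_1+1,…,λ_{n−2}+1, −λ_{n−1}−1), p−λ_n−n+1) with value c_n^− = −p−λ_n+n. Then the following are equivalent: (i) for every c ∈ ℤ the element Σ_{(i,ε) : (c_i^ε)² = c²} (−1)^{i−1} W_i^ε of F lies in the ℤ-span of the restriction elements {r(λ',p')}; (ii) p = n or λ_n = 0. (Theorem A(2): for G = SO₀(2,2n) a highest weight λ is good if and only if λ(H₀) = n√−1 or V_λ|_{SO(2n)} is self-dual.) -/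

import Mathlib

open scoped Classical

/-- The predicate defining `ℤ^k_{++}`: `λ_1 ≥ … ≥ λ_{k−1} ≥ |λ_k|`, equivalently
`|λ_j| ≤ λ_i` for all `i < j`. -/
def IsPP {k : ℕ} (l : Fin k → ℤ) : Prop := ∀ i j : Fin k, i < j → |l j| ≤ l i

/-- `ℤ^k_{++}` as a type. -/
abbrev ZPP (k : ℕ) : Type := {l : Fin k → ℤ // IsPP l}

/-- The free `ℤ`-module `F = K⁰(K_M)` on the basis `ℤ^{n−1}_{++} × ℤ` for
`G = SO₀(2,2n)` (here `n = n0 + 2`). -/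
abbrev FSO (n0 : ℕ) : Type := (ZPP (n0 + 1) × ℤ) →₀ ℤ

variable {n0 : ℕ}

/-- The interlacing conditions of the branching law from `SO(2n)` to `SO(2n−2)`:
`λ_i ≥ μ_i ≥ λ_{i+2}` for `1 ≤ i ≤ n−3`, `λ_{n−2} ≥ μ_{n−2} ≥ |λ_n|`, and
`λ_{n−1} ≥ |μ_{n−1}|` (written `0`-indexed, with `n = n0 + 2`). -/
def Interlace (l : Fin (n0 + 2) → ℤ) (μ : Fin (n0 + 1) → ℤ) : Prop :=
  (∀ i : ℕ, (h : i + 2 ≤ n0) →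
      μ ⟨i, by omega⟩ ≤ l ⟨i, by omega⟩ ∧ l ⟨i + 2, by omega⟩ ≤ μ ⟨i, by omega⟩) ∧
  (∀ _ : 1 ≤ n0,
      μ ⟨n0 - 1, by omega⟩ ≤ l ⟨n0 - 1, by omega⟩ ∧
        |l ⟨n0 + 1, by omega⟩| ≤ μ ⟨n0 - 1, by omega⟩) ∧
  |μ ⟨n0, by omega⟩| ≤ l ⟨n0, by omega⟩

/-- The tuple `(ℓ_1, …, ℓ_{n−1})` of the branching law (written `0`-indexed):
`ℓ_1 = λ_1 − max(λ_2, μ_1)`, `ℓ_i = min(λ_i, μ_{i−1}) − max(λ_{i+1}, μ_i)` for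
`2 ≤ i ≤ n−2`, and `ℓ_{n−1} = min(λ_{n−1}, μ_{n−2}) − max(|λ_n|, |μ_{n−1}|)`. -/
def lvec (l : Fin (n0 + 2) → ℤ) (μ : Fin (n0 + 1) → ℤ) : Fin (n0 + 1) → ℤ := fun i =>
  (if (i : ℕ) = 0 then l i.castSucc
    else min (l i.castSucc) (μ ⟨(i : ℕ) - 1, by have := i.isLt; omega⟩)) -
  (if (i : ℕ) = n0 then max |l (Fin.last (n0 + 1))| |μ (Fin.last n0)|
    else max (l i.succ) (μ i))

/-- The number `ℓ_n = sgn(λ_n)·sgn(μ_{n−1})·min(|λ_n|, |μ_{n−1}|)`. -/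
def lsgn (l : Fin (n0 + 2) → ℤ) (μ : Fin (n0 + 1) → ℤ) : ℤ :=
  Int.sign (l (Fin.last (n0 + 1))) * Int.sign (μ (Fin.last n0)) *
    min |l (Fin.last (n0 + 1))| |μ (Fin.last n0)|

/-- The multiplicity `m(k) = #{(k_1,…,k_{n−1}) ∈ ℤ^{n−1} : 0 ≤ k_i ≤ ℓ_i, Σ_i k_i = k}`. -/
noncomputable def mult (l : Fin (n0 + 2) → ℤ) (μ : Fin (n0 + 1) → ℤ) (k : ℤ) : ℕ :=
  ((Finset.Icc (0 : Fin (n0 + 1) → ℤ) (lvec l μ)).filter fun t => (∑ i, t i) = k).card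

/-- The restriction element
`r(λ,p) = Σ_μ Σ_{k=0}^{ℓ} m(k) · e_{(μ, p+ℓ_n+2k−ℓ)}`, the class of
`π_{λ,p}|_{K_M}` (the outer sum is over `μ ∈ ℤ^{n−1}_{++}` satisfying the
interlacing conditions, all of which lie in the box `[−λ_1, λ_1]^{n−1}`). -/
noncomputable def rSO (l : Fin (n0 + 2) → ℤ) (p : ℤ) : FSO n0 :=
  ∑ μ ∈ Finset.Icc (fun _ : Fin (n0 + 1) => -(l 0)) (fun _ : Fin (n0 + 1) => l 0),
    if h : IsPP μ ∧ Interlace l μ then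
      ∑ k ∈ Finset.Icc (0 : ℤ) (∑ i, lvec l μ i),
        (mult l μ k : ℤ) •
          Finsupp.single ((⟨μ, h.1⟩ : ZPP (n0 + 1)),
            p + lsgn l μ + 2 * k - ∑ i, lvec l μ i) 1
    else 0

/-- `μ* = (μ_1, …, μ_{n−2}, −μ_{n−1})`. -/
def starPP (μ : ZPP (n0 + 1)) : ZPP (n0 + 1) :=
  ⟨fun i => if i = Fin.last n0 then -(μ.1 i) else μ.1 i, by
    intro i j hij
    dsimp only
    have hij' : (i : ℕ) < (j : ℕ) := hij
    have hi : ¬(i = Fin.last n0) := by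
      intro h
      have : (i : ℕ) = n0 := by simpa using congrArg Fin.val h
      have := j.isLt
      omega
    rw [if_neg hi]
    by_cases hj : j = Fin.last n0
    · rw [if_pos hj, abs_neg]
      exact μ.2 i j hij
    · rw [if_neg hj]
      exact μ.2 i j hij⟩

def Wplus (l : Fin (n0 + 2) → ℤ) (a : ℕ) : Fin (n0 + 1) → ℤ := fun j =>
  if (j : ℕ) < a then l j.castSucc + 1
  else if (j : ℕ) < n0 then l j.succ
  else l (Fin.last (n0 + 1))

theorem isPP_Wplus {l : Fin (n0 + 2) → ℤ} (hl : IsPP l) (a : ℕ) : IsPP (Wplus l a) := by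
  have key3 : ∀ x : Fin (n0 + 2), (x : ℕ) ≤ n0 → |l (Fin.last (n0 + 1))| ≤ l x := by
    intro x hx
    exact hl x (Fin.last (n0 + 1)) (by simp [Fin.lt_def]; omega)
  have key2 : ∀ x : Fin (n0 + 2), (x : ℕ) ≤ n0 → 0 ≤ l x :=
    fun x hx => le_trans (abs_nonneg _) (key3 x hx)
  have key : ∀ x y : Fin (n0 + 2), (x : ℕ) ≤ (y : ℕ) → (y : ℕ) ≤ n0 → l y ≤ l x := by
    intro x y hxy hy
    rcases Nat.eq_or_lt_of_le hxy with h | h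
    · rw [Fin.ext h]
    · exact le_trans (le_abs_self _) (hl x y (Fin.lt_def.mpr h))
  intro i j hij
  have hij' : (i : ℕ) < (j : ℕ) := hij
  have hj1 : (j : ℕ) ≤ n0 := Nat.lt_succ_iff.mp j.isLt
  have hi1 : (i : ℕ) < n0 := lt_of_lt_of_le hij' hj1
  unfold Wplus
  split_ifs with h1 h2 h3 h4 h5
  · have m1 := key i.castSucc j.castSucc
      (by simp only [Fin.coe_castSucc]; omega) (by simp only [Fin.coe_castSucc]; omega)
    have n1 := key2 j.castSucc (by simp only [Fin.coe_castSucc]; omega)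
    rw [abs_of_nonneg (by linarith)]
    linarith
  · exact absurd (by omega : (i : ℕ) < a) h2
  · have m1 := key i.castSucc j.succ
      (by simp only [Fin.coe_castSucc, Fin.val_succ]; omega)
      (by simp only [Fin.val_succ]; omega)
    have n1 := key2 j.succ (by simp only [Fin.val_succ]; omega)
    rw [abs_of_nonneg n1]
    linarith
  · have m1 := key i.succ j.succ
      (by simp only [Fin.val_succ]; omega) (by simp only [Fin.val_succ]; omega)
    have n1 := key2 j.succ (by simp only [Fin.val_succ]; omega)
    rw [abs_of_nonneg n1]
    linarith
  · have m1 := key3 i.castSucc (by simp only [Fin.coe_castSucc]; omega)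
    linarith
  · have m1 := key3 i.succ (by simp only [Fin.val_succ]; omega)
    linarith

def Wminus (l : Fin (n0 + 2) → ℤ) (a : ℕ) : Fin (n0 + 1) → ℤ := fun j =>
  if (j : ℕ) < n0 then (if (j : ℕ) < a then l j.castSucc + 1 else l j.succ)
  else if a ≤ n0 then -(l (Fin.last (n0 + 1))) else -(l j.castSucc) - 1

theorem isPP_Wminus {l : Fin (n0 + 2) → ℤ} (hl : IsPP l) (a : ℕ) : IsPP (Wminus l a) := by
  have key3 : ∀ x : Fin (n0 + 2), (x : ℕ) ≤ n0 → |l (Fin.last (n0 + 1))| ≤ l x := by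
    intro x hx
    exact hl x (Fin.last (n0 + 1)) (by simp [Fin.lt_def]; omega)
  have key2 : ∀ x : Fin (n0 + 2), (x : ℕ) ≤ n0 → 0 ≤ l x :=
    fun x hx => le_trans (abs_nonneg _) (key3 x hx)
  have key : ∀ x y : Fin (n0 + 2), (x : ℕ) ≤ (y : ℕ) → (y : ℕ) ≤ n0 → l y ≤ l x := by
    intro x y hxy hy
    rcases Nat.eq_or_lt_of_le hxy with h | h
    · rw [Fin.ext h]
    · exact le_trans (le_abs_self _) (hl x y (Fin.lt_def.mpr h))
  intro i j hij
  have hij' : (i : ℕ) < (j : ℕ) := hij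
  have hj1 : (j : ℕ) ≤ n0 := Nat.lt_succ_iff.mp j.isLt
  have hi1 : (i : ℕ) < n0 := lt_of_lt_of_le hij' hj1
  unfold Wminus
  split_ifs with h1 h2 h3 h4 h5 h6 h7
  · have m1 := key i.castSucc j.castSucc
      (by simp only [Fin.coe_castSucc]; omega) (by simp only [Fin.coe_castSucc]; omega)
    have n1 := key2 j.castSucc (by simp only [Fin.coe_castSucc]; omega)
    rw [abs_of_nonneg (by linarith)]
    linarith
  · exact absurd (by omega : (i : ℕ) < a) h3
  · have m1 := key i.castSucc j.succ
      (by simp only [Fin.coe_castSucc, Fin.val_succ]; omega)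
      (by simp only [Fin.val_succ]; omega)
    have n1 := key2 j.succ (by simp only [Fin.val_succ]; omega)
    rw [abs_of_nonneg n1]
    linarith
  · have m1 := key i.succ j.succ
      (by simp only [Fin.val_succ]; omega) (by simp only [Fin.val_succ]; omega)
    have n1 := key2 j.succ (by simp only [Fin.val_succ]; omega)
    rw [abs_of_nonneg n1]
    linarith
  · have m1 := key3 i.castSucc (by simp only [Fin.coe_castSucc]; omega)
    rw [abs_neg]
    linarith
  · have m1 := key3 i.succ (by simp only [Fin.val_succ]; omega)
    rw [abs_neg]
    linarith
  · have m1 := key i.castSucc j.castSucc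
      (by simp only [Fin.coe_castSucc]; omega) (by simp only [Fin.coe_castSucc]; omega)
    have n1 := key2 j.castSucc (by simp only [Fin.coe_castSucc]; omega)
    have e1 : -l j.castSucc - 1 = -(l j.castSucc + 1) := by ring
    rw [e1, abs_neg, abs_of_nonneg (by linarith)]
    linarith
  · exact absurd (by omega : (i : ℕ) < a) h7

/-! ### Auxiliary development -/

section Aux

variable {n0 : ℕ}

/-- Flip the sign of the last coordinate (function level). -/
def stf (μ : Fin (n0 + 1) → ℤ) : Fin (n0 + 1) → ℤ :=
  fun i => if i = Fin.last n0 then -μ i else μ i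

/-- Canonical representative: absolute value on the last coordinate. -/
def canf (μ : Fin (n0 + 1) → ℤ) : Fin (n0 + 1) → ℤ :=
  fun i => if i = Fin.last n0 then |μ i| else μ i

/-- Weight of a vector. -/
def wtf (μ : Fin (n0 + 1) → ℤ) : ℕ := ∑ i, (μ i).natAbs

lemma stf_last (μ : Fin (n0 + 1) → ℤ) : stf μ (Fin.last n0) = -μ (Fin.last n0) := by
  simp [stf]

lemma stf_ne_last (μ : Fin (n0 + 1) → ℤ) {i : Fin (n0 + 1)} (h : i ≠ Fin.last n0) :
    stf μ i = μ i := by simp [stf, h]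

lemma stf_stf (μ : Fin (n0 + 1) → ℤ) : stf (stf μ) = μ := by
  funext i
  by_cases h : i = Fin.last n0 <;> simp [stf, h]

lemma canf_stf (μ : Fin (n0 + 1) → ℤ) : canf (stf μ) = canf μ := by
  funext i
  by_cases h : i = Fin.last n0 <;> simp [canf, stf, h]

lemma wtf_stf (μ : Fin (n0 + 1) → ℤ) : wtf (stf μ) = wtf μ := by
  unfold wtf
  refine Finset.sum_congr rfl fun i _ => ?_
  by_cases h : i = Fin.last n0 <;> simp [stf, h]

lemma isPP_stf_of {μ : Fin (n0 + 1) → ℤ} (h : IsPP μ) : IsPP (stf μ) := by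
  intro i j hij
  have hi : i ≠ Fin.last n0 := by
    intro hh
    have := j.isLt
    have h1 : (i : ℕ) < (j : ℕ) := hij
    have h2 : (i : ℕ) = n0 := by simpa using congrArg Fin.val hh
    omega
  rw [stf_ne_last μ hi]
  by_cases hj : j = Fin.last n0
  · subst hj
    rw [stf_last, abs_neg]
    exact h i _ hij
  · rw [stf_ne_last μ hj]
    exact h i j hij

lemma isPP_stf_iff {μ : Fin (n0 + 1) → ℤ} : IsPP (stf μ) ↔ IsPP μ :=
  ⟨fun h => by simpa [stf_stf] using isPP_stf_of h, isPP_stf_of⟩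

lemma mk_ne_last {i : ℕ} (h : i < n0) (hh : i < n0 + 1) :
    (⟨i, hh⟩ : Fin (n0 + 1)) ≠ Fin.last n0 := by
  intro he
  have := congrArg Fin.val he
  simp at this
  omega

lemma interlace_stf_of {l : Fin (n0 + 2) → ℤ} {μ : Fin (n0 + 1) → ℤ}
    (h : Interlace l μ) : Interlace l (stf μ) := by
  obtain ⟨h1, h2, h3⟩ := h
  refine ⟨?_, ?_, ?_⟩
  · intro i hi
    rw [stf_ne_last μ (mk_ne_last (by omega) _)]
    exact h1 i hi
  · intro hn
    rw [stf_ne_last μ (mk_ne_last (by omega) _)]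
    exact h2 hn
  · have : (⟨n0, by omega⟩ : Fin (n0 + 1)) = Fin.last n0 := rfl
    rw [this, stf_last, abs_neg]
    exact h3

lemma interlace_stf_iff {l : Fin (n0 + 2) → ℤ} {μ : Fin (n0 + 1) → ℤ} :
    Interlace l (stf μ) ↔ Interlace l μ :=
  ⟨fun h => by simpa [stf_stf] using interlace_stf_of h, interlace_stf_of⟩

lemma last_eq_mk : (Fin.last n0 : Fin (n0 + 1)) = ⟨n0, by omega⟩ := rfl

lemma lvec_stf (l : Fin (n0 + 2) → ℤ) (μ : Fin (n0 + 1) → ℤ) :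
    lvec l (stf μ) = lvec l μ := by
  funext i
  unfold lvec
  have hlast : stf μ (Fin.last n0) = -μ (Fin.last n0) := stf_last μ
  by_cases h0 : (i : ℕ) = 0 <;> by_cases hn : (i : ℕ) = n0
  · rw [if_pos h0, if_pos h0, if_pos hn, if_pos hn, hlast, abs_neg]
  · rw [if_pos h0, if_pos h0, if_neg hn, if_neg hn,
      stf_ne_last μ (by intro he; have := congrArg Fin.val he; simp at this; omega)]
  · rw [if_neg h0, if_neg h0, if_pos hn, if_pos hn, hlast, abs_neg,
      stf_ne_last μ (mk_ne_last (by have := i.isLt; omega) _)]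
  · rw [if_neg h0, if_neg h0, if_neg hn, if_neg hn,
      stf_ne_last μ (mk_ne_last (by have := i.isLt; omega) _),
      stf_ne_last μ (by intro he; have := congrArg Fin.val he; simp at this; omega)]

lemma mult_stf (l : Fin (n0 + 2) → ℤ) (μ : Fin (n0 + 1) → ℤ) (k : ℤ) :
    mult l (stf μ) k = mult l μ k := by
  unfold mult
  rw [lvec_stf]

lemma lsgn_stf (l : Fin (n0 + 2) → ℤ) (μ : Fin (n0 + 1) → ℤ) :
    lsgn l (stf μ) = -lsgn l μ := by
  unfold lsgn
  rw [stf_last, abs_neg, Int.sign_neg]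
  ring

end Aux

section Phi

variable {n0 : ℕ}

/-- The obstruction functional. -/
noncomputable def Phi : FSO n0 →ₗ[ℤ] (((Fin (n0 + 1) → ℤ) × ZMod 2) →₀ ℤ) :=
  Finsupp.linearCombination ℤ fun k : ZPP (n0 + 1) × ℤ =>
    Int.sign (k.1.1 (Fin.last n0)) • Finsupp.single (canf k.1.1, (k.2 : ZMod 2)) 1

lemma Phi_single (μ : ZPP (n0 + 1)) (q : ℤ) (c : ℤ) :
    Phi (Finsupp.single (μ, q) c) =
      (c * Int.sign (μ.1 (Fin.last n0))) • Finsupp.single (canf μ.1, (q : ZMod 2)) 1 := by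
  unfold Phi
  rw [Finsupp.linearCombination_single, smul_smul]

lemma zmod2_cast_eq {a b : ℤ} (h : a % 2 = b % 2) : ((a : ZMod 2) = (b : ZMod 2)) := by
  have : a ≡ b [ZMOD 2] := h
  exact (ZMod.intCast_eq_intCast_iff a b 2).2 this

lemma Phi_r (l : Fin (n0 + 2) → ℤ) (p : ℤ) : Phi (rSO l p) = (0 : _) := by
  unfold rSO
  rw [map_sum]
  refine Finset.sum_involution (fun μ _ => stf μ) ?_ ?_ ?_ ?_
  · intro μ hμ
    by_cases hP : IsPP μ ∧ Interlace l μ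
    · have hP' : IsPP (stf μ) ∧ Interlace l (stf μ) :=
        ⟨isPP_stf_iff.2 hP.1, interlace_stf_iff.2 hP.2⟩
      rw [dif_pos hP, dif_pos hP', map_sum, map_sum]
      rw [lvec_stf, ← Finset.sum_add_distrib]
      refine Finset.sum_eq_zero fun k hk => ?_
      rw [map_smul, map_smul, Phi_single, Phi_single]
      simp only [mult_stf, lsgn_stf]
      have hcan : canf (stf μ) = canf μ := canf_stf μ
      have hpar : (((p + -lsgn l μ + 2 * k - ∑ i, lvec l μ i : ℤ)) : ZMod 2)
          = (((p + lsgn l μ + 2 * k - ∑ i, lvec l μ i : ℤ)) : ZMod 2) := by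
        apply zmod2_cast_eq
        omega
      rw [hcan, hpar, stf_last, Int.sign_neg, smul_smul, smul_smul, ← add_smul]
      convert zero_smul ℤ _ using 2
      ring
    · have hP' : ¬(IsPP (stf μ) ∧ Interlace l (stf μ)) := by
        intro hc
        exact hP ⟨isPP_stf_iff.1 hc.1, interlace_stf_iff.1 hc.2⟩
      rw [dif_neg hP, dif_neg hP', map_zero, add_zero]
  · intro μ hμ hne
    intro he
    apply hne
    have hlast : μ (Fin.last n0) = 0 := by
      have := congrFun he (Fin.last n0)
      rw [stf_last] at this
      omega
    by_cases hP : IsPP μ ∧ Interlace l μ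
    · rw [dif_pos hP, map_sum]
      refine Finset.sum_eq_zero fun k hk => ?_
      rw [map_smul, Phi_single]
      simp [hlast]
    · rw [dif_neg hP, map_zero]
  · intro μ hμ
    rw [Finset.mem_Icc] at hμ ⊢
    have h1 := hμ.1
    have h2 := hμ.2
    rw [Pi.le_def] at h1 h2
    constructor <;> intro i <;> dsimp only <;> by_cases h : i = Fin.last n0
    · subst h
      rw [stf_last]
      have := h2 (Fin.last n0)
      linarith
    · rw [stf_ne_last μ h]; exact h1 i
    · subst h
      rw [stf_last]
      have := h1 (Fin.last n0)
      linarith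
    · rw [stf_ne_last μ h]; exact h2 i
  · intro μ hμ
    exact stf_stf μ

end Phi
section Corner

variable {n0 : ℕ}

/-- Extend `ν` by an extra last entry `t`. -/
def extf (ν : Fin (n0 + 1) → ℤ) (t : ℤ) : Fin (n0 + 2) → ℤ :=
  fun i => if h : (i : ℕ) < n0 + 1 then ν ⟨i, h⟩ else t

lemma extf_mk (ν : Fin (n0 + 1) → ℤ) (t : ℤ) {i : ℕ} (h : i < n0 + 1) (h2 : i < n0 + 2) :
    extf ν t ⟨i, h2⟩ = ν ⟨i, h⟩ := by
  unfold extf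
  rw [dif_pos (show ((⟨i, h2⟩ : Fin (n0 + 2)) : ℕ) < n0 + 1 from h)]

lemma extf_last (ν : Fin (n0 + 1) → ℤ) (t : ℤ) :
    extf ν t (Fin.last (n0 + 1)) = t := by simp [extf]

lemma extf_last' (ν : Fin (n0 + 1) → ℤ) (t : ℤ) (h2 : n0 + 1 < n0 + 2) :
    extf ν t ⟨n0 + 1, h2⟩ = t := extf_last ν t

lemma canon_nonneg {ν : Fin (n0 + 1) → ℤ} (hν : IsPP ν) (hν0 : 0 ≤ ν (Fin.last n0))
    (i : Fin (n0 + 1)) : 0 ≤ ν i := by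
  by_cases h : i = Fin.last n0
  · subst h; exact hν0
  · have hi : (i : ℕ) < n0 := by
      have h1 := i.isLt
      have h2 : (i : ℕ) ≠ n0 := fun hc => h (Fin.ext (by simpa using hc))
      omega
    have := hν i (Fin.last n0) (by rw [Fin.lt_def]; simpa using hi)
    exact le_trans (abs_nonneg _) this

lemma canon_mono {ν : Fin (n0 + 1) → ℤ} (hν : IsPP ν)
    {i j : Fin (n0 + 1)} (hij : i ≤ j) : ν j ≤ ν i := by
  rcases eq_or_lt_of_le hij with h | h
  · rw [h]
  · exact le_trans (le_abs_self _) (hν i j h)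

lemma isPP_extf {ν : Fin (n0 + 1) → ℤ} (hν : IsPP ν) (hν0 : 0 ≤ ν (Fin.last n0))
    {t : ℤ} (ht0 : 0 ≤ t) (ht : t ≤ ν (Fin.last n0)) : IsPP (extf ν t) := by
  intro i j hij
  have hij' : (i : ℕ) < (j : ℕ) := hij
  have hi : (i : ℕ) < n0 + 1 := by have := j.isLt; omega
  have hie : i = ⟨(i : ℕ), by omega⟩ := Fin.ext rfl
  rw [hie, extf_mk ν t hi]
  by_cases hj : (j : ℕ) < n0 + 1
  · have hje : j = ⟨(j : ℕ), by omega⟩ := Fin.ext rfl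
    rw [hje, extf_mk ν t hj]
    exact hν ⟨i, hi⟩ ⟨j, hj⟩ (by rw [Fin.lt_def]; exact hij')
  · have hje : j = Fin.last (n0 + 1) := Fin.ext (by have := j.isLt; simp; omega)
    rw [hje, extf_last, abs_of_nonneg ht0]
    refine le_trans ht (canon_mono hν ?_)
    rw [last_eq_mk, Fin.mk_le_mk]
    omega

lemma corner_interlace {ν : Fin (n0 + 1) → ℤ} (hν : IsPP ν) (hν0 : 0 ≤ ν (Fin.last n0))
    {t : ℤ} (ht0 : 0 ≤ t) (ht : t ≤ ν (Fin.last n0)) :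
    Interlace (extf ν t) ν := by
  refine ⟨?_, ?_, ?_⟩
  · intro i hi
    rw [extf_mk ν t (by omega), extf_mk ν t (by omega)]
    exact ⟨le_rfl, canon_mono hν (Fin.mk_le_mk.mpr (by omega))⟩
  · intro hn
    rw [extf_mk ν t (by omega), extf_last' ν t, abs_of_nonneg ht0]
    refine ⟨le_rfl, le_trans ht (canon_mono hν ?_)⟩
    rw [last_eq_mk, Fin.mk_le_mk]
    omega
  · rw [extf_mk ν t (by omega)]
    rw [show (⟨n0, by omega⟩ : Fin (n0 + 1)) = Fin.last n0 from rfl, abs_of_nonneg hν0]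

end Corner
section Corner2

variable {n0 : ℕ}

lemma interlace_bound {ν : Fin (n0 + 1) → ℤ} (hν : IsPP ν) (hν0 : 0 ≤ ν (Fin.last n0))
    {t : ℤ} (ht0 : 0 ≤ t) {μ : Fin (n0 + 1) → ℤ}
    (h : Interlace (extf ν t) μ) (i : Fin (n0 + 1)) :
    |μ i| ≤ ν i ∧ (i ≠ Fin.last n0 → 0 ≤ μ i) := by
  obtain ⟨h1, h2, h3⟩ := h
  have hlt := i.isLt
  rcases lt_trichotomy ((i : ℕ) + 2) (n0 + 1) with hc | hc | hc
  · -- i + 2 ≤ n0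
    have hi2 : (i : ℕ) + 2 ≤ n0 := by omega
    obtain ⟨ha, hb⟩ := h1 i hi2
    rw [extf_mk ν t (by omega)] at ha
    rw [extf_mk ν t (by omega)] at hb
    have hie : (⟨(i : ℕ), by omega⟩ : Fin (n0 + 1)) = i := Fin.ext rfl
    rw [hie] at ha hb
    have h0 : 0 ≤ ν ⟨(i : ℕ) + 2, by omega⟩ := canon_nonneg hν hν0 _
    have hb' : 0 ≤ μ i := le_trans h0 hb
    have hvi : 0 ≤ ν i := canon_nonneg hν hν0 _
    exact ⟨abs_le.mpr ⟨by linarith, ha⟩, fun _ => hb'⟩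
  · -- i = n0 - 1, n0 ≥ 1
    have hn : 1 ≤ n0 := by omega
    obtain ⟨ha, hb⟩ := h2 hn
    rw [extf_mk ν t (by omega)] at ha
    rw [extf_last' ν t, abs_of_nonneg ht0] at hb
    have hie : (⟨n0 - 1, by omega⟩ : Fin (n0 + 1)) = i := Fin.ext (by simp; omega)
    rw [hie] at ha hb
    have hb' : 0 ≤ μ i := le_trans ht0 hb
    exact ⟨abs_le.mpr ⟨by linarith, ha⟩, fun _ => hb'⟩
  · -- i = n0
    have hie : i = Fin.last n0 := Fin.ext (by simp; omega)
    subst hie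
    rw [extf_mk ν t (show n0 < n0 + 1 by omega)] at h3
    have h3' : |μ (Fin.last n0)| ≤ ν (Fin.last n0) := h3
    exact ⟨h3', fun hc => absurd rfl hc⟩

lemma wtf_le_of_abs_le {μ ν : Fin (n0 + 1) → ℤ} (h : ∀ i, |μ i| ≤ |ν i|) :
    wtf μ ≤ wtf ν := by
  refine Finset.sum_le_sum fun i _ => ?_
  have := h i
  simp only [Int.abs_eq_natAbs] at this
  omega

lemma interlace_wt {ν : Fin (n0 + 1) → ℤ} (hν : IsPP ν) (hν0 : 0 ≤ ν (Fin.last n0))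
    {t : ℤ} (ht0 : 0 ≤ t) {μ : Fin (n0 + 1) → ℤ}
    (h : Interlace (extf ν t) μ) :
    wtf μ ≤ wtf ν ∧ (wtf μ = wtf ν → μ = ν ∨ μ = stf ν) := by
  have hb := interlace_bound hν hν0 ht0 h
  have habs : ∀ i, |μ i| ≤ |ν i| := fun i => le_trans (hb i).1 (le_abs_self _)
  have hle : ∀ i ∈ Finset.univ, (μ i).natAbs ≤ (ν i).natAbs := by
    intro i _
    have := habs i
    simp only [Int.abs_eq_natAbs] at this
    omega
  refine ⟨Finset.sum_le_sum hle, fun heq => ?_⟩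
  have hall : ∀ i, (μ i).natAbs = (ν i).natAbs := by
    intro i
    by_contra hne
    have hlt : (μ i).natAbs < (ν i).natAbs :=
      lt_of_le_of_ne (hle i (Finset.mem_univ i)) hne
    have := Finset.sum_lt_sum hle ⟨i, Finset.mem_univ i, hlt⟩
    unfold wtf at heq
    omega
  have hvpos : ∀ i, 0 ≤ ν i := canon_nonneg hν hν0
  by_cases hlast : 0 ≤ μ (Fin.last n0)
  · left
    funext i
    have h1 := hall i
    have h2 := hvpos i
    by_cases hi : i = Fin.last n0
    · subst hi; omega
    · have := (hb i).2 hi; omega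
  · right
    funext i
    have h1 := hall i
    have h2 := hvpos i
    by_cases hi : i = Fin.last n0
    · subst hi
      rw [stf_last]
      omega
    · rw [stf_ne_last ν hi]
      have := (hb i).2 hi
      omega

end Corner2
section Corner3

variable {n0 : ℕ}

lemma extf_castSucc (ν : Fin (n0 + 1) → ℤ) (t : ℤ) (i : Fin (n0 + 1)) :
    extf ν t i.castSucc = ν i := by
  have h : i.castSucc = (⟨(i : ℕ), by omega⟩ : Fin (n0 + 2)) := Fin.ext (by simp)
  rw [h, extf_mk ν t i.isLt]

lemma extf_succ (ν : Fin (n0 + 1) → ℤ) (t : ℤ) {i : Fin (n0 + 1)} (h : (i : ℕ) < n0) :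
    extf ν t i.succ = ν ⟨(i : ℕ) + 1, by omega⟩ := by
  have h2 : i.succ = (⟨(i : ℕ) + 1, by omega⟩ : Fin (n0 + 2)) := Fin.ext (by simp)
  rw [h2, extf_mk ν t (by omega)]

lemma corner_lvec {ν : Fin (n0 + 1) → ℤ} (hν : IsPP ν) (hν0 : 0 ≤ ν (Fin.last n0))
    {t : ℤ} (ht0 : 0 ≤ t) (ht : t ≤ ν (Fin.last n0)) :
    lvec (extf ν t) ν = 0 := by
  funext i
  have hlt := i.isLt
  unfold lvec
  rw [extf_last, abs_of_nonneg ht0, extf_castSucc]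
  by_cases h0 : (i : ℕ) = 0 <;> by_cases hn : (i : ℕ) = n0
  · rw [if_pos h0, if_pos hn]
    have hie : i = Fin.last n0 := Fin.ext (by simpa using hn)
    subst hie
    rw [abs_of_nonneg hν0, max_eq_right ht]
    simp
  · rw [if_pos h0, if_neg hn, extf_succ ν t (by omega)]
    have h1 : ν ⟨(i : ℕ) + 1, by omega⟩ ≤ ν i := canon_mono hν (by rw [Fin.le_def]; simp)
    rw [max_eq_right h1]
    simp
  · rw [if_neg h0, if_pos hn]
    have hie : i = Fin.last n0 := Fin.ext (by simpa using hn)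
    have h1 : ν i ≤ ν ⟨(i : ℕ) - 1, by omega⟩ := canon_mono hν (by rw [Fin.le_def]; simp <;> omega)
    rw [min_eq_left h1]
    rw [hie, abs_of_nonneg hν0, max_eq_right ht]
    simp
  · rw [if_neg h0, if_neg hn, extf_succ ν t (by omega)]
    have h1 : ν i ≤ ν ⟨(i : ℕ) - 1, by omega⟩ := canon_mono hν (by rw [Fin.le_def]; simp <;> omega)
    have h2 : ν ⟨(i : ℕ) + 1, by omega⟩ ≤ ν i := canon_mono hν (by rw [Fin.le_def]; simp)
    rw [min_eq_left h1, max_eq_right h2]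
    simp

lemma corner_lsgn {ν : Fin (n0 + 1) → ℤ} (hν0 : 0 ≤ ν (Fin.last n0))
    {t : ℤ} (ht0 : 0 ≤ t) (ht : t ≤ ν (Fin.last n0)) :
    lsgn (extf ν t) ν = t := by
  unfold lsgn
  rw [extf_last, abs_of_nonneg ht0, abs_of_nonneg hν0, min_eq_left ht]
  rcases eq_or_lt_of_le ht0 with h | h
  · rw [← h]; simp
  · rw [Int.sign_eq_one_of_pos h, Int.sign_eq_one_of_pos (lt_of_lt_of_le h ht)]
    ring

/-- Single summand of `rSO`. -/
noncomputable def rterm (l : Fin (n0 + 2) → ℤ) (p : ℤ) (μ : Fin (n0 + 1) → ℤ) : FSO n0 :=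
  if h : IsPP μ ∧ Interlace l μ then
    ∑ k ∈ Finset.Icc (0 : ℤ) (∑ i, lvec l μ i),
      (mult l μ k : ℤ) •
        Finsupp.single ((⟨μ, h.1⟩ : ZPP (n0 + 1)),
          p + lsgn l μ + 2 * k - ∑ i, lvec l μ i) 1
  else 0

lemma rSO_eq_sum (l : Fin (n0 + 2) → ℤ) (p : ℤ) :
    rSO l p = ∑ μ ∈ Finset.Icc (fun _ : Fin (n0 + 1) => -(l 0)) (fun _ : Fin (n0 + 1) => l 0),
      rterm l p μ := rfl

lemma rterm_support {l : Fin (n0 + 2) → ℤ} {p : ℤ} {μ : Fin (n0 + 1) → ℤ}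
    {k : ZPP (n0 + 1) × ℤ} (hk : k ∈ (rterm l p μ).support) :
    (k.1 : ZPP (n0 + 1)).1 = μ ∧ IsPP μ ∧ Interlace l μ := by
  unfold rterm at hk
  split_ifs at hk with h
  · refine ⟨?_, h⟩
    have := Finsupp.support_finset_sum hk
    rw [Finset.mem_biUnion] at this
    obtain ⟨j, _, hj⟩ := this
    have := Finsupp.support_smul hj
    have := Finsupp.support_single_subset this
    rw [Finset.mem_singleton] at this
    rw [this]
  · simp at hk

lemma corner_eval {ν : Fin (n0 + 1) → ℤ} (hν : IsPP ν) (hν0 : 0 ≤ ν (Fin.last n0))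
    {t : ℤ} (ht0 : 0 ≤ t) (ht : t ≤ ν (Fin.last n0)) (p : ℤ) :
    rterm (extf ν t) p ν = Finsupp.single ((⟨ν, hν⟩ : ZPP (n0 + 1)), p + t) 1 := by
  unfold rterm
  rw [dif_pos ⟨hν, corner_interlace hν hν0 ht0 ht⟩]
  have hlv : lvec (extf ν t) ν = 0 := corner_lvec hν hν0 ht0 ht
  have hsum : (∑ i, lvec (extf ν t) ν i) = 0 := by rw [hlv]; simp
  rw [hsum, Finset.Icc_self, Finset.sum_singleton]
  have hm : mult (extf ν t) ν 0 = 1 := by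
    unfold mult
    rw [hlv, Finset.Icc_self, Finset.filter_singleton, if_pos (by simp)]
    simp
  rw [hm, corner_lsgn hν0 ht0 ht]
  norm_num

lemma corner_eval_stf {ν : Fin (n0 + 1) → ℤ} (hν : IsPP ν) (hν0 : 0 ≤ ν (Fin.last n0))
    {t : ℤ} (ht0 : 0 ≤ t) (ht : t ≤ ν (Fin.last n0)) (p : ℤ) :
    rterm (extf ν t) p (stf ν) =
      Finsupp.single ((⟨stf ν, isPP_stf_of hν⟩ : ZPP (n0 + 1)), p - t) 1 := by
  unfold rterm
  rw [dif_pos ⟨isPP_stf_of hν, interlace_stf_of (corner_interlace hν hν0 ht0 ht)⟩]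
  have hlv : lvec (extf ν t) (stf ν) = 0 := by
    rw [lvec_stf]; exact corner_lvec hν hν0 ht0 ht
  have hsum : (∑ i, lvec (extf ν t) (stf ν) i) = 0 := by rw [hlv]; simp
  rw [hsum, Finset.Icc_self, Finset.sum_singleton]
  have hm : mult (extf ν t) (stf ν) 0 = 1 := by
    unfold mult
    rw [hlv, Finset.Icc_self, Finset.filter_singleton, if_pos (by simp)]
    simp
  rw [hm, lsgn_stf, corner_lsgn hν0 ht0 ht]
  norm_num
  first
  | rfl
  | (congr 1; ring)
  | (congr 2; ring)

end Corner3
section Decomp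

variable {n0 : ℕ}

/-- The span of the restriction elements. -/
noncomputable def RSpan (n0 : ℕ) : Submodule ℤ (FSO n0) :=
  Submodule.span ℤ {x : FSO n0 | ∃ (l' : Fin (n0 + 2) → ℤ) (p' : ℤ), IsPP l' ∧ x = rSO l' p'}

lemma rSO_mem {l : Fin (n0 + 2) → ℤ} (hl : IsPP l) (p : ℤ) : rSO l p ∈ RSpan n0 :=
  Submodule.subset_span ⟨l, p, hl, rfl⟩

lemma Phi_RSpan {x : FSO n0} (hx : x ∈ RSpan n0) : Phi x = 0 := by
  refine Submodule.span_induction ?_ ?_ ?_ ?_ hx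
  · rintro y ⟨l', p', _, rfl⟩
    exact Phi_r l' p'
  · exact map_zero Phi
  · intro y z _ _ hy hz
    rw [map_add, hy, hz, add_zero]
  · intro a y _ hy
    rw [map_smul, hy, smul_zero]

lemma mem_box {ν : Fin (n0 + 1) → ℤ} (hν : IsPP ν) (hν0 : 0 ≤ ν (Fin.last n0))
    {μ : Fin (n0 + 1) → ℤ} (h : ∀ i, |μ i| ≤ ν 0) (t : ℤ) :
    μ ∈ Finset.Icc (fun _ : Fin (n0 + 1) => -(extf ν t 0)) (fun _ : Fin (n0 + 1) => extf ν t 0) := by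
  have h0 : extf ν t 0 = ν 0 := by
    have : (0 : Fin (n0 + 2)) = ⟨0, by omega⟩ := rfl
    rw [this, extf_mk ν t (by omega)]
    rfl
  rw [Finset.mem_Icc, h0]
  constructor <;> intro i <;> have := abs_le.mp (h i)
  · exact this.1
  · exact this.2

lemma self_abs_le {ν : Fin (n0 + 1) → ℤ} (hν : IsPP ν) (hν0 : 0 ≤ ν (Fin.last n0))
    (i : Fin (n0 + 1)) : |ν i| ≤ ν 0 := by
  rw [abs_of_nonneg (canon_nonneg hν hν0 i)]
  exact canon_mono hν (Fin.zero_le i)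

/-- Corner decomposition of a restriction element for `λ = (ν, t)`. -/
lemma corner_decomp {ν : Fin (n0 + 1) → ℤ} (hν : IsPP ν) (hν0 : 0 ≤ ν (Fin.last n0))
    {t : ℤ} (ht0 : 0 ≤ t) (ht : t ≤ ν (Fin.last n0)) (p : ℤ) :
    ∃ z : FSO n0,
      rSO (extf ν t) p
        = Finsupp.single ((⟨ν, hν⟩ : ZPP (n0 + 1)), p + t) 1
          + (if ν (Fin.last n0) = 0 then 0
             else Finsupp.single ((⟨stf ν, isPP_stf_of hν⟩ : ZPP (n0 + 1)), p - t) 1)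
          + z
      ∧ ∀ k ∈ z.support, wtf (k.1 : ZPP (n0 + 1)).1 < wtf ν := by
  classical
  set l := extf ν t with hldef
  have hboxν : ν ∈ Finset.Icc (fun _ : Fin (n0 + 1) => -(l 0)) (fun _ : Fin (n0 + 1) => l 0) :=
    mem_box hν hν0 (self_abs_le hν hν0) t
  -- support bound helper
  have hsupp : ∀ (s : Finset (Fin (n0 + 1) → ℤ)),
      (∀ μ ∈ s, μ ≠ ν ∧ μ ≠ stf ν) →
      ∀ k ∈ (∑ μ ∈ s, rterm l p μ).support, wtf (k.1 : ZPP (n0 + 1)).1 < wtf ν := by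
    intro s hs k hk
    have := Finsupp.support_finset_sum hk
    rw [Finset.mem_biUnion] at this
    obtain ⟨μ, hμs, hμk⟩ := this
    obtain ⟨hk1, _, hint⟩ := rterm_support hμk
    have hwt := interlace_wt hν hν0 ht0 hint
    rw [hk1]
    rcases lt_or_eq_of_le hwt.1 with h | h
    · exact h
    · rcases hwt.2 h with h2 | h2
      · exact absurd h2 (hs μ hμs).1
      · exact absurd h2 (hs μ hμs).2
  by_cases hs : ν (Fin.last n0) = 0
  · -- degenerate case: stf ν = ν
    have ht' : t = 0 := le_antisymm (hs ▸ ht) ht0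
    subst ht'
    refine ⟨∑ μ ∈ (Finset.Icc (fun _ : Fin (n0 + 1) => -(l 0))
        (fun _ : Fin (n0 + 1) => l 0)).erase ν, rterm l p μ, ?_, ?_⟩
    · rw [if_pos hs, add_zero, rSO_eq_sum]
      rw [← Finset.add_sum_erase _ _ hboxν]
      rw [corner_eval hν hν0 le_rfl (by omega) p]
    · refine hsupp _ fun μ hμ => ?_
      have h1 := Finset.ne_of_mem_erase hμ
      have h2 : stf ν = ν := by
        funext i
        by_cases hi : i = Fin.last n0
        · subst hi; rw [stf_last, hs]; ring
        · rw [stf_ne_last ν hi]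
      exact ⟨h1, by rw [h2]; exact h1⟩
  · -- nondegenerate case
    have hsne : stf ν ≠ ν := by
      intro hc
      have := congrFun hc (Fin.last n0)
      rw [stf_last] at this
      omega
    have hboxσ : stf ν ∈ Finset.Icc (fun _ : Fin (n0 + 1) => -(l 0))
        (fun _ : Fin (n0 + 1) => l 0) := by
      refine mem_box hν hν0 (fun i => ?_) t
      by_cases hi : i = Fin.last n0
      · subst hi; rw [stf_last, abs_neg]; exact self_abs_le hν hν0 _
      · rw [stf_ne_last ν hi]; exact self_abs_le hν hν0 i
    have hboxσ' : stf ν ∈ (Finset.Icc (fun _ : Fin (n0 + 1) => -(l 0))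
        (fun _ : Fin (n0 + 1) => l 0)).erase ν := Finset.mem_erase.mpr ⟨hsne, hboxσ⟩
    refine ⟨∑ μ ∈ ((Finset.Icc (fun _ : Fin (n0 + 1) => -(l 0))
        (fun _ : Fin (n0 + 1) => l 0)).erase ν).erase (stf ν), rterm l p μ, ?_, ?_⟩
    · rw [if_neg hs, rSO_eq_sum]
      rw [← Finset.add_sum_erase _ _ hboxν, ← Finset.add_sum_erase _ _ hboxσ']
      rw [corner_eval hν hν0 ht0 ht p, corner_eval_stf hν hν0 ht0 ht p, add_assoc]
    · refine hsupp _ fun μ hμ => ?_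
      exact ⟨Finset.ne_of_mem_erase (Finset.mem_of_mem_erase hμ),
        Finset.ne_of_mem_erase hμ⟩

end Decomp
section Chain

variable {n0 : ℕ}

/-- All support elements have weight `< wtf ν`. -/
def lowsupp (ν : Fin (n0 + 1) → ℤ) (z : FSO n0) : Prop :=
  ∀ k ∈ z.support, wtf (k.1 : ZPP (n0 + 1)).1 < wtf ν

lemma lowsupp_zero (ν : Fin (n0 + 1) → ℤ) : lowsupp ν (0 : FSO n0) := by
  intro k hk
  simp at hk

lemma lowsupp_add {ν : Fin (n0 + 1) → ℤ} {z1 z2 : FSO n0}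
    (h1 : lowsupp ν z1) (h2 : lowsupp ν z2) : lowsupp ν (z1 + z2) := by
  intro k hk
  rcases Finset.mem_union.mp (Finsupp.support_add hk) with h | h
  · exact h1 k h
  · exact h2 k h

lemma lowsupp_neg {ν : Fin (n0 + 1) → ℤ} {z : FSO n0} (h : lowsupp ν z) :
    lowsupp ν (-z) := by
  intro k hk
  rw [Finsupp.support_neg] at hk
  exact h k hk

lemma lowsupp_sub {ν : Fin (n0 + 1) → ℤ} {z1 z2 : FSO n0}
    (h1 : lowsupp ν z1) (h2 : lowsupp ν z2) : lowsupp ν (z1 - z2) := by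
  rw [sub_eq_add_neg]
  exact lowsupp_add h1 (lowsupp_neg h2)

lemma lowsupp_smul {ν : Fin (n0 + 1) → ℤ} {z : FSO n0} (c : ℤ) (h : lowsupp ν z) :
    lowsupp ν (c • z) := by
  intro k hk
  exact h k (Finsupp.support_smul hk)

lemma lowsupp_sum {ν : Fin (n0 + 1) → ℤ} {α : Type*} {s : Finset α} {f : α → FSO n0}
    (h : ∀ a ∈ s, lowsupp ν (f a)) : lowsupp ν (∑ a ∈ s, f a) := by
  intro k hk
  have := Finsupp.support_finset_sum hk
  rw [Finset.mem_biUnion] at this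
  obtain ⟨a, ha, hka⟩ := this
  exact h a ha k hka

/-- Telescoping building block: kills a `q`-shift by two on the `ν` side. -/
lemma chainA {ν : Fin (n0 + 1) → ℤ} (hν : IsPP ν) (hν0 : 0 ≤ ν (Fin.last n0))
    (hs : ν (Fin.last n0) ≠ 0) (r : ℤ) :
    ∃ w : FSO n0, w ∈ RSpan n0 ∧ ∃ z, lowsupp ν z ∧
      w = Finsupp.single ((⟨ν, hν⟩ : ZPP (n0 + 1)), r) 1
          - Finsupp.single ((⟨ν, hν⟩ : ZPP (n0 + 1)), r - 2) 1 + z := by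
  have hs1 : (1 : ℤ) ≤ ν (Fin.last n0) := by
    rcases lt_or_eq_of_le hν0 with h | h
    · omega
    · exact absurd h.symm hs
  obtain ⟨z1, he1, hz1⟩ := corner_decomp hν hν0 (by norm_num) hs1 (r - 1)
  obtain ⟨z2, he2, hz2⟩ := corner_decomp hν hν0 le_rfl (le_trans (by norm_num) hs1) (r - 2)
  rw [if_neg hs] at he1 he2
  refine ⟨rSO (extf ν 1) (r - 1) - rSO (extf ν 0) (r - 2), ?_, z1 - z2, lowsupp_sub hz1 hz2, ?_⟩
  · exact Submodule.sub_mem _ (rSO_mem (isPP_extf hν hν0 (by norm_num) hs1) _)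
      (rSO_mem (isPP_extf hν hν0 le_rfl (le_trans (by norm_num) hs1)) _)
  · rw [he1, he2]
    rw [show r - 1 + 1 = r by ring, show r - 1 - 1 = r - 2 by ring,
      show r - 2 + 0 = r - 2 by ring, show r - 2 - 0 = r - 2 by ring]
    abel

/-- Telescoped chain: `e(ν,q) − e(ν,q−2m)` modulo low terms, in the span. -/
lemma chain {ν : Fin (n0 + 1) → ℤ} (hν : IsPP ν) (hν0 : 0 ≤ ν (Fin.last n0))
    (hs : ν (Fin.last n0) ≠ 0) (q : ℤ) (m : ℤ) :
    ∃ w : FSO n0, w ∈ RSpan n0 ∧ ∃ z, lowsupp ν z ∧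
      w = Finsupp.single ((⟨ν, hν⟩ : ZPP (n0 + 1)), q) 1
          - Finsupp.single ((⟨ν, hν⟩ : ZPP (n0 + 1)), q - 2 * m) 1 + z := by
  induction m using Int.induction_on with
  | zero =>
    refine ⟨0, Submodule.zero_mem _, 0, lowsupp_zero ν, ?_⟩
    rw [show q - 2 * (0 : ℤ) = q by ring]
    abel
  | succ i ih =>
    obtain ⟨w, hw, z, hz, he⟩ := ih
    obtain ⟨w2, hw2, z2, hz2, he2⟩ := chainA hν hν0 hs (q - 2 * i)
    refine ⟨w + w2, Submodule.add_mem _ hw hw2, z + z2, lowsupp_add hz hz2, ?_⟩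
    rw [he, he2, show q - 2 * i - 2 = q - 2 * (i + 1) by ring]
    abel
  | pred i ih =>
    obtain ⟨w, hw, z, hz, he⟩ := ih
    obtain ⟨w2, hw2, z2, hz2, he2⟩ := chainA hν hν0 hs (q - 2 * (-i - 1))
    refine ⟨w - w2, Submodule.sub_mem _ hw hw2, z - z2, lowsupp_sub hz hz2, ?_⟩
    rw [he, he2, show q - 2 * (-i - 1) - 2 = q - 2 * (-(i : ℤ)) by ring]
    abel

end Chain
section Step

variable {n0 : ℕ}

lemma canf_eq_of_nonneg {μ : Fin (n0 + 1) → ℤ} (h : 0 ≤ μ (Fin.last n0)) :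
    canf μ = μ := by
  funext i
  by_cases hi : i = Fin.last n0
  · subst hi; simp [canf, abs_of_nonneg h]
  · simp [canf, hi]

lemma canf_eq_stf_of_neg {μ : Fin (n0 + 1) → ℤ} (h : μ (Fin.last n0) < 0) :
    canf μ = stf μ := by
  funext i
  by_cases hi : i = Fin.last n0
  · subst hi; simp [canf, stf, abs_of_neg h]
  · simp [canf, stf, hi]

lemma wtf_canf (μ : Fin (n0 + 1) → ℤ) : wtf (canf μ) = wtf μ := by
  rcases lt_or_ge (μ (Fin.last n0)) 0 with h | h
  · rw [canf_eq_stf_of_neg h, wtf_stf]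
  · rw [canf_eq_of_nonneg h]

/-- Penalty of a key at top weight. -/
def pen (k : ZPP (n0 + 1) × ℤ) : ℕ :=
  if (k.1 : ZPP (n0 + 1)).1 (Fin.last n0) < 0 then 2
  else if (k.1 : ZPP (n0 + 1)).1 (Fin.last n0) = 0 then 1
  else if k.2 = 0 ∨ k.2 = 1 then 0 else 1

/-- One clearing step. -/
lemma step (k0 : ZPP (n0 + 1) × ℤ) (hpen : 0 < pen k0) :
    ∃ w ∈ RSpan n0, ∃ (k1 : ZPP (n0 + 1) × ℤ) (c : ℤ) (z : FSO n0),
      w = Finsupp.single k0 1 + c • Finsupp.single k1 1 + z ∧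
      (∀ k ∈ z.support, wtf (k.1 : ZPP (n0 + 1)).1 < wtf (k0.1 : ZPP (n0 + 1)).1) ∧
      wtf (k1.1 : ZPP (n0 + 1)).1 = wtf (k0.1 : ZPP (n0 + 1)).1 ∧
      (c = 0 ∨ (pen k1 < pen k0 ∧ k1 ≠ k0)) := by
  obtain ⟨⟨μ, hμ⟩, q⟩ := k0
  dsimp only at *
  rcases lt_trichotomy (μ (Fin.last n0)) 0 with hneg | hzero | hpos
  · -- σ-side key
    set ν := stf μ with hν
    have hνPP : IsPP ν := isPP_stf_of hμ
    have hν0 : 0 ≤ ν (Fin.last n0) := by rw [hν, stf_last]; omega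
    have hνne : ν (Fin.last n0) ≠ 0 := by rw [hν, stf_last]; omega
    obtain ⟨z, he, hz⟩ := corner_decomp hνPP hν0 le_rfl hν0 q
    rw [if_neg hνne] at he
    refine ⟨rSO (extf ν 0) q, rSO_mem (isPP_extf hνPP hν0 le_rfl hν0) q,
      ((⟨ν, hνPP⟩ : ZPP (n0 + 1)), q), 1, z, ?_, ?_, wtf_stf μ, Or.inr ⟨?_, ?_⟩⟩
    · rw [he]
      have h1 : (⟨stf ν, isPP_stf_of hνPP⟩ : ZPP (n0 + 1)) = ⟨μ, hμ⟩ :=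
        Subtype.ext (stf_stf μ)
      rw [h1, one_smul]
      rw [show q - 0 = q by ring, show q + 0 = q by ring]
      abel
    · intro k hk
      have := hz k hk
      rwa [wtf_stf μ] at this
    · have hst : ν (Fin.last n0) = -μ (Fin.last n0) := stf_last μ
      unfold pen
      dsimp only
      split_ifs <;> omega
    · intro hc
      have := congrArg (fun k => (k.1 : ZPP (n0 + 1)).1 (Fin.last n0)) hc
      dsimp at this
      rw [hν, stf_last] at this
      omega
  · -- last coordinate zero
    have hν0 : 0 ≤ μ (Fin.last n0) := le_of_eq hzero.symm
    obtain ⟨z, he, hz⟩ := corner_decomp hμ hν0 le_rfl hν0 q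
    rw [if_pos hzero] at he
    refine ⟨rSO (extf μ 0) q, rSO_mem (isPP_extf hμ hν0 le_rfl hν0) q,
      ((⟨μ, hμ⟩ : ZPP (n0 + 1)), q), 0, z, ?_, hz, rfl, Or.inl rfl⟩
    rw [he, zero_smul, show q + 0 = q by ring]
  · -- ν-side key, positive last coordinate
    have hν0 : 0 ≤ μ (Fin.last n0) := le_of_lt hpos
    have hνne : μ (Fin.last n0) ≠ 0 := by omega
    have hq : ¬(q = 0 ∨ q = 1) := by
      intro hc
      have h0 : pen ((⟨μ, hμ⟩ : ZPP (n0 + 1)), q) = 0 := by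
        unfold pen
        dsimp only
        split_ifs <;> omega
      omega
    obtain ⟨w, hw, z, hz, he⟩ := chain hμ hν0 hνne q (q / 2)
    have hmod : q - 2 * (q / 2) = q % 2 := by omega
    rw [hmod] at he
    refine ⟨w, hw, ((⟨μ, hμ⟩ : ZPP (n0 + 1)), q % 2), -1, z, ?_, hz, rfl, Or.inr ⟨?_, ?_⟩⟩
    · rw [he, neg_one_smul]
      abel
    · unfold pen
      dsimp only
      split_ifs <;> omega
    · intro hc
      have := congrArg (fun k => k.2) hc
      dsimp at this
      omega

end Step
section Main

variable {n0 : ℕ}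

def penN (N : ℕ) (k : ZPP (n0 + 1) × ℤ) : ℕ :=
  if wtf (k.1 : ZPP (n0 + 1)).1 = N then pen k else 0

def pensum (N : ℕ) (x : FSO n0) : ℕ := ∑ k ∈ x.support, penN N k

lemma Phi_apply (x : FSO n0) (κ : (Fin (n0 + 1) → ℤ) × ZMod 2) :
    (Phi x) κ = ∑ k ∈ x.support,
      x k * (Int.sign ((k.1 : ZPP (n0 + 1)).1 (Fin.last n0)) *
        (if (canf (k.1 : ZPP (n0 + 1)).1, ((k.2 : ℤ) : ZMod 2)) = κ then 1 else 0)) := by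
  unfold Phi
  rw [Finsupp.linearCombination_apply, Finsupp.sum, Finsupp.finset_sum_apply]
  refine Finset.sum_congr rfl fun k _ => ?_
  rw [Finsupp.smul_apply, Finsupp.smul_apply, Finsupp.single_apply]
  rw [smul_eq_mul, smul_eq_mul]

lemma pen_zero_struct {k : ZPP (n0 + 1) × ℤ} (h : pen k = 0) :
    0 < (k.1 : ZPP (n0 + 1)).1 (Fin.last n0) ∧ (k.2 = 0 ∨ k.2 = 1) := by
  unfold pen at h
  split_ifs at h with h1 h2 h3
  all_goals first
  | exact ⟨by omega, h3⟩
  | omega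

lemma main_notop {N : ℕ} {x : FSO n0} (hphi : Phi x = 0)
    (hb : ∀ k ∈ x.support, wtf (k.1 : ZPP (n0 + 1)).1 ≤ N)
    (h0 : pensum N x = 0) :
    ∀ k ∈ x.support, wtf (k.1 : ZPP (n0 + 1)).1 ≠ N := by
  intro k0 hk0 hwt
  have hpen : ∀ k ∈ x.support, wtf (k.1 : ZPP (n0 + 1)).1 = N → pen k = 0 := by
    intro k hk hw
    have := (Finset.sum_eq_zero_iff.mp h0) k hk
    unfold penN at this
    rwa [if_pos hw] at this
  obtain ⟨hpos0, hq0⟩ := pen_zero_struct (hpen k0 hk0 hwt)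
  have hcan0 : canf (k0.1 : ZPP (n0 + 1)).1 = (k0.1 : ZPP (n0 + 1)).1 :=
    canf_eq_of_nonneg (le_of_lt hpos0)
  have heval := congrFun (congrArg (fun f => f.toFun) hphi)
    (canf (k0.1 : ZPP (n0 + 1)).1, ((k0.2 : ℤ) : ZMod 2))
  have heval' : (Phi x) (canf (k0.1 : ZPP (n0 + 1)).1, ((k0.2 : ℤ) : ZMod 2)) = 0 := heval
  rw [Phi_apply] at heval'
  rw [Finset.sum_eq_single_of_mem k0 hk0 ?side] at heval'
  · rw [if_pos rfl, Int.sign_eq_one_of_pos hpos0] at heval'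
    simp at heval'
    exact (Finsupp.mem_support_iff.mp hk0) heval'
  · intro k hk hne
    by_cases hw : wtf (k.1 : ZPP (n0 + 1)).1 = N
    · obtain ⟨hpos, hq⟩ := pen_zero_struct (hpen k hk hw)
      have hcan : canf (k.1 : ZPP (n0 + 1)).1 = (k.1 : ZPP (n0 + 1)).1 :=
        canf_eq_of_nonneg (le_of_lt hpos)
      rw [if_neg, mul_zero, mul_zero]
      intro hc
      apply hne
      have h1 : (k.1 : ZPP (n0 + 1)).1 = (k0.1 : ZPP (n0 + 1)).1 := by
        have := congrArg Prod.fst hc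
        dsimp at this
        rwa [hcan, hcan0] at this
      have h2 : ((k.2 : ℤ) : ZMod 2) = ((k0.2 : ℤ) : ZMod 2) := congrArg Prod.snd hc
      have h3 : k.2 = k0.2 := by
        rcases hq with h | h <;> rcases hq0 with h' | h' <;>
          rw [h, h'] at h2 ⊢ <;> first | rfl | (exfalso; revert h2; decide)
      exact Prod.ext (Subtype.ext h1) h3
    · rw [if_neg, mul_zero, mul_zero]
      intro hc
      apply hw
      have := congrArg Prod.fst hc
      dsimp at this
      have h4 := congrArg wtf this
      rw [wtf_canf, wtf_canf] at h4
      omega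

lemma nat_sum_union_le {α : Type*} [DecidableEq α] (s t : Finset α) (f : α → ℕ) :
    ∑ k ∈ s ∪ t, f k ≤ ∑ k ∈ s, f k + ∑ k ∈ t, f k := by
  have h1 : s ∪ t = s ∪ (t \ s) := (Finset.union_sdiff_self_eq_union).symm
  rw [h1, Finset.sum_union Finset.disjoint_sdiff]
  exact Nat.add_le_add_left (Finset.sum_le_sum_of_subset (Finset.sdiff_subset (s := t) (t := s))) _

lemma main_ker (N : ℕ) : ∀ x : FSO n0, Phi x = 0 →
    (∀ k ∈ x.support, wtf (k.1 : ZPP (n0 + 1)).1 ≤ N) → x ∈ RSpan n0 := by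
  induction N using Nat.strong_induction_on with
  | _ N ihN =>
  suffices H : ∀ P : ℕ, ∀ x : FSO n0, Phi x = 0 →
      (∀ k ∈ x.support, wtf (k.1 : ZPP (n0 + 1)).1 ≤ N) → pensum N x ≤ P → x ∈ RSpan n0 by
    intro x h1 h2
    exact H (pensum N x) x h1 h2 le_rfl
  have base : ∀ x : FSO n0, Phi x = 0 →
      (∀ k ∈ x.support, wtf (k.1 : ZPP (n0 + 1)).1 ≤ N) → pensum N x = 0 → x ∈ RSpan n0 := by
    intro x hphi hb h0
    have hne := main_notop hphi hb h0
    match N, ihN with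
    | 0, _ =>
      have : x.support = ∅ := by
        by_contra hc
        obtain ⟨k, hk⟩ := Finset.nonempty_of_ne_empty hc
        exact hne k hk (Nat.le_zero.mp (hb k hk))
      rw [Finsupp.support_eq_empty.mp this]
      exact Submodule.zero_mem _
    | (M + 1), ihN =>
      refine ihN M (by omega) x hphi fun k hk => ?_
      have := hb k hk
      have := hne k hk
      omega
  intro P
  induction P with
  | zero => intro x h1 h2 h3; exact base x h1 h2 (Nat.le_zero.mp h3)
  | succ P ihP =>
    intro x hphi hb hP
    by_cases h0 : pensum N x = 0
    · exact base x hphi hb h0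
    · obtain ⟨k0, hk0, hpen0⟩ := Finset.exists_ne_zero_of_sum_ne_zero h0
      have hwt0 : wtf (k0.1 : ZPP (n0 + 1)).1 = N := by
        unfold penN at hpen0
        by_contra hc
        rw [if_neg hc] at hpen0
        exact hpen0 rfl
      have hp0 : 0 < pen k0 := by
        unfold penN at hpen0
        rw [if_pos hwt0] at hpen0
        omega
      obtain ⟨w, hw, k1, c, z, he, hzlow, hk1wt, hcase⟩ := step k0 hp0
      set a := x k0 with ha
      have hz_k : ∀ k : ZPP (n0 + 1) × ℤ, wtf (k.1 : ZPP (n0 + 1)).1 = N → z k = 0 := by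
        intro k hk
        by_contra hc
        have := hzlow k (Finsupp.mem_support_iff.mpr hc)
        omega
      set x' := x - a • w with hx'
      have hxeq : x = x' + a • w := by rw [hx']; abel
      have hphix' : Phi x' = 0 := by
        rw [hx', map_sub, hphi, map_smul, Phi_RSpan hw, smul_zero, sub_zero]
      -- coefficient facts
      have happ : ∀ k : ZPP (n0 + 1) × ℤ, x' k = x k -
          a * ((if k0 = k then 1 else 0) + c * (if k1 = k then 1 else 0) + z k) := by
        intro k
        rw [hx', Finsupp.sub_apply, Finsupp.smul_apply, he]
        rw [Finsupp.add_apply, Finsupp.add_apply, Finsupp.smul_apply,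
          Finsupp.single_apply, Finsupp.single_apply]
        rw [smul_eq_mul, smul_eq_mul]
      have hx'k0 : x' k0 = 0 := by
        rw [happ k0, if_pos rfl, hz_k k0 hwt0]
        rcases hcase with hc0 | ⟨_, hne⟩
        · rw [hc0]; ring
        · rw [if_neg hne]; ring
      have hsupp' : x'.support ⊆ (x.support.erase k0 ∪ {k1}) ∪ z.support := by
        intro k hk
        rw [Finsupp.mem_support_iff] at hk
        by_contra hc
        rw [Finset.mem_union, Finset.mem_union, Finset.mem_singleton] at hc
        push_neg at hc
        obtain ⟨⟨hc1, hc2⟩, hc3⟩ := hc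
        by_cases hkk0 : k = k0
        · subst hkk0
          exact hk hx'k0
        · apply hk
          have hxk : x k = 0 := by
            by_contra hxk
            exact hc1 (Finset.mem_erase.mpr ⟨hkk0, Finsupp.mem_support_iff.mpr hxk⟩)
          rw [happ k, if_neg (fun h => hkk0 h.symm), if_neg (fun h => hc2 h.symm),
            Finsupp.notMem_support_iff.mp hc3, hxk]
          ring
      have hconc : ∀ T : Finset (ZPP (n0 + 1) × ℤ), x'.support ⊆ T →
          (∑ k ∈ T, penN N k) ≤ P → x ∈ RSpan n0 := by
        intro T hT hTP
        have hbdd' : ∀ k ∈ x'.support, wtf (k.1 : ZPP (n0 + 1)).1 ≤ N := by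
          intro k hk
          rcases Finset.mem_union.mp (hsupp' hk) with h | h
          · rcases Finset.mem_union.mp h with h' | h'
            · exact hb k (Finset.mem_of_mem_erase h')
            · rw [Finset.mem_singleton] at h'
              subst h'
              omega
          · have := hzlow k h
            omega
        have hpen' : pensum N x' ≤ P :=
          le_trans (Finset.sum_le_sum_of_subset hT) hTP
        have hx'mem : x' ∈ RSpan n0 := ihP x' hphix' hbdd' hpen'
        rw [hxeq]
        exact Submodule.add_mem _ hx'mem (Submodule.smul_mem _ a hw)
      have hzsum : ∑ k ∈ z.support, penN N k = 0 :=
        Finset.sum_eq_zero fun k hk => by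
          unfold penN
          rw [if_neg]
          have := hzlow k hk
          omega
      have h5 : penN N k0 + ∑ k ∈ x.support.erase k0, penN N k = pensum N x :=
        Finset.add_sum_erase _ _ hk0
      have h7 : penN N k0 = pen k0 := by unfold penN; rw [if_pos hwt0]
      rcases hcase with hc0 | ⟨hlt, hnek⟩
      · -- c = 0 case
        refine hconc (x.support.erase k0 ∪ z.support) ?_ ?_
        · intro k hk
          have hkne : k ≠ k0 := by
            intro hc
            subst hc
            exact (Finsupp.mem_support_iff.mp hk) hx'k0
          rw [Finset.mem_union]
          by_contra hc
          push_neg at hc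
          apply Finsupp.mem_support_iff.mp hk
          have hxk : x k = 0 := by
            by_contra hxk
            exact hc.1 (Finset.mem_erase.mpr ⟨hkne, Finsupp.mem_support_iff.mpr hxk⟩)
          rw [happ k, if_neg (fun h => hkne h.symm), hc0,
            Finsupp.notMem_support_iff.mp hc.2, hxk]
          ring
        · have := nat_sum_union_le (x.support.erase k0) z.support (penN N)
          omega
      · -- c ≠ 0 case
        refine hconc ((x.support.erase k0 ∪ {k1}) ∪ z.support) hsupp' ?_
        have h8 : penN N k1 = pen k1 := by
          unfold penN
          rw [if_pos (by omega)]
        have hu1 := nat_sum_union_le (x.support.erase k0 ∪ {k1}) z.support (penN N)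
        have hu2 := nat_sum_union_le (x.support.erase k0) {k1} (penN N)
        have h6 : ∑ k ∈ ({k1} : Finset (ZPP (n0 + 1) × ℤ)), penN N k = penN N k1 :=
          Finset.sum_singleton _ _
        omega
  
end Main
section WStruct

variable {n0 : ℕ}

lemma wminus_eq_stf (l : Fin (n0 + 2) → ℤ) (a : ℕ) (ha : a ≤ n0 + 1) :
    Wminus l a = stf (Wplus l a) := by
  funext j
  by_cases hj : j = Fin.last n0
  · subst hj
    rw [stf_last]
    unfold Wminus Wplus
    have hval : ((Fin.last n0 : Fin (n0 + 1)) : ℕ) = n0 := by simp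
    rw [hval]
    by_cases ha' : a ≤ n0
    · rw [if_neg (by omega), if_pos ha', if_neg (by omega), if_neg (by omega)]
    · rw [if_neg (by omega), if_neg ha', if_pos (by omega)]
      ring
  · have hjv : (j : ℕ) < n0 := by
      have h1 := j.isLt
      have h2 : (j : ℕ) ≠ n0 := fun hc => hj (Fin.ext (by simpa using hc))
      omega
    rw [stf_ne_last _ hj]
    unfold Wminus Wplus
    rw [if_pos hjv]
    by_cases hja : (j : ℕ) < a
    · rw [if_pos hja, if_pos hja]
    · rw [if_neg hja, if_neg hja, if_pos hjv]

lemma wplus_last_le (l : Fin (n0 + 2) → ℤ) (a : ℕ) (ha : a ≤ n0) :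
    Wplus l a (Fin.last n0) = l (Fin.last (n0 + 1)) := by
  unfold Wplus
  have hval : ((Fin.last n0 : Fin (n0 + 1)) : ℕ) = n0 := by simp
  rw [hval, if_neg (by omega), if_neg (by omega)]

lemma wplus_last_top (l : Fin (n0 + 2) → ℤ) :
    Wplus l (n0 + 1) (Fin.last n0) = l ((Fin.last n0).castSucc) + 1 := by
  unfold Wplus
  rw [if_pos (by simp)]

lemma l_mono {l : Fin (n0 + 2) → ℤ} (hl : IsPP l) {i j : ℕ}
    (hij : i < j) (hj : j ≤ n0) (hi2 : i < n0 + 2) (hj2 : j < n0 + 2) :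
    l ⟨j, hj2⟩ ≤ l ⟨i, hi2⟩ :=
  le_trans (le_abs_self _) (hl ⟨i, hi2⟩ ⟨j, hj2⟩ (by rw [Fin.lt_def]; exact hij))

lemma l_abs_last {l : Fin (n0 + 2) → ℤ} (hl : IsPP l) {i : ℕ} (hi : i ≤ n0)
    (hi2 : i < n0 + 2) : |l (Fin.last (n0 + 1))| ≤ l ⟨i, hi2⟩ :=
  hl ⟨i, hi2⟩ (Fin.last (n0 + 1)) (by rw [Fin.lt_def]; simp; omega)

/-- Injectivity of the canonical Weyl-term classes. -/
lemma canf_wplus_inj {l : Fin (n0 + 2) → ℤ} (hl : IsPP l) {a b : ℕ}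
    (ha : a ≤ n0 + 1) (hb : b ≤ n0 + 1)
    (h : canf (Wplus l a) = canf (Wplus l b)) : a = b := by
  by_contra hne
  -- wlog a < b
  wlog hab : a < b generalizing a b
  · exact this hb ha h.symm (fun hc => hne hc.symm) (by omega)
  -- evaluate at coordinate a
  have haj : a < n0 + 1 := by omega
  set j : Fin (n0 + 1) := ⟨a, haj⟩ with hjdef
  have hval := congrFun h j
  unfold canf at hval
  by_cases hjl : j = Fin.last n0
  · -- a = n0, b = n0 + 1
    have han : a = n0 := by
      have := congrArg Fin.val hjl
      simpa using this
    have hbn : b = n0 + 1 := by omega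
    rw [if_pos hjl, if_pos hjl] at hval
    rw [hjl] at hval
    rw [han, hbn] at hval
    rw [wplus_last_le l n0 le_rfl, wplus_last_top l] at hval
    have h1 : |l (Fin.last (n0 + 1))| ≤ l ((Fin.last n0).castSucc) :=
      hl _ _ (by rw [Fin.lt_def]; simp)
    have h4 : l ((Fin.last n0).castSucc) + 1 ≤ |l ((Fin.last n0).castSucc) + 1| :=
      le_abs_self _
    omega
  · rw [if_neg hjl, if_neg hjl] at hval
    have hjn : (j : ℕ) < n0 := by
      have h1 := j.isLt
      have h2 : (j : ℕ) ≠ n0 := fun hc => hjl (Fin.ext (by simpa using hc))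
      omega
    have hja : (j : ℕ) = a := rfl
    unfold Wplus at hval
    rw [if_neg (by omega), if_pos (by omega), if_pos (by omega)] at hval
    -- hval : l j.succ = l j.castSucc + 1, contradiction with monotonicity
    have hmono : l j.succ ≤ l j.castSucc := by
      have := l_mono hl (i := (j : ℕ)) (j := (j : ℕ) + 1) (by omega) (by omega)
        (by omega) (by omega)
      have he1 : j.castSucc = (⟨(j : ℕ), by omega⟩ : Fin (n0 + 2)) := Fin.ext (by simp)
      have he2 : j.succ = (⟨(j : ℕ) + 1, by omega⟩ : Fin (n0 + 2)) := Fin.ext (by simp)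
      rw [he1, he2]
      exact this
    omega

end WStruct
section Assembly

variable {n0 : ℕ}

/-- `Φ` of a matched `±` pair of Weyl terms vanishes. -/
lemma phi_pair {l : Fin (n0 + 2) → ℤ} (hl : IsPP l) (p c : ℤ) (a : Fin (n0 + 2))
    (h : ((-p + l a - ((a : ℕ) : ℤ) + 2 * n0 + 3) ^ 2 = c ^ 2) ↔
         ((-p - l a + ((a : ℕ) : ℤ) + 1) ^ 2 = c ^ 2)) :
    Phi ((if (-p + l a - ((a : ℕ) : ℤ) + 2 * n0 + 3) ^ 2 = c ^ 2 then
            ((-1 : ℤ) ^ (a : ℕ)) •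
              Finsupp.single ((⟨Wplus l a, isPP_Wplus hl a⟩ : ZPP (n0 + 1)),
                p + l a - (a : ℕ)) 1
          else 0) +
        (if (-p - l a + ((a : ℕ) : ℤ) + 1) ^ 2 = c ^ 2 then
            ((-1 : ℤ) ^ (a : ℕ)) •
              Finsupp.single ((⟨Wminus l a, isPP_Wminus hl a⟩ : ZPP (n0 + 1)),
                p - l a - 2 * n0 - 2 + (a : ℕ)) 1
          else 0)) = 0 := by
  by_cases hc : (-p + l a - ((a : ℕ) : ℤ) + 2 * n0 + 3) ^ 2 = c ^ 2
  · rw [if_pos hc, if_pos (h.mp hc), map_add, map_smul, map_smul,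
      Phi_single, Phi_single]
    have hK : canf (Wminus l a) = canf (Wplus l a) := by
      rw [wminus_eq_stf l a (by omega), canf_stf]
    have hpar : (((p - l a - 2 * n0 - 2 + (a : ℕ) : ℤ)) : ZMod 2)
        = (((p + l a - (a : ℕ) : ℤ)) : ZMod 2) := zmod2_cast_eq (by omega)
    have hsgn : Int.sign ((⟨Wminus l a, isPP_Wminus hl a⟩ : ZPP (n0 + 1)).1 (Fin.last n0))
        = -Int.sign ((⟨Wplus l a, isPP_Wplus hl a⟩ : ZPP (n0 + 1)).1 (Fin.last n0)) := by
      dsimp only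
      rw [wminus_eq_stf l a (by omega), stf_last, Int.sign_neg]
    rw [hK, hpar, hsgn, smul_smul, smul_smul, ← add_smul]
    convert zero_smul ℤ _ using 2
    ring
  · rw [if_neg hc, if_neg (fun hcc => hc (h.mpr hcc)), add_zero, map_zero]

/-- `Φ` of a single Weyl term vanishes when the last coordinate is `0`. -/
lemma phi_term_zero {l : Fin (n0 + 2) → ℤ} (hl : IsPP l)
    (hz : l (Fin.last (n0 + 1)) = 0) (p c : ℤ) (a : Fin (n0 + 2)) (ha : (a : ℕ) ≤ n0) :
    Phi ((if (-p + l a - ((a : ℕ) : ℤ) + 2 * n0 + 3) ^ 2 = c ^ 2 then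
            ((-1 : ℤ) ^ (a : ℕ)) •
              Finsupp.single ((⟨Wplus l a, isPP_Wplus hl a⟩ : ZPP (n0 + 1)),
                p + l a - (a : ℕ)) 1
          else 0) +
        (if (-p - l a + ((a : ℕ) : ℤ) + 1) ^ 2 = c ^ 2 then
            ((-1 : ℤ) ^ (a : ℕ)) •
              Finsupp.single ((⟨Wminus l a, isPP_Wminus hl a⟩ : ZPP (n0 + 1)),
                p - l a - 2 * n0 - 2 + (a : ℕ)) 1
          else 0)) = 0 := by
  have hplus : Wplus l a (Fin.last n0) = 0 := by rw [wplus_last_le l a ha, hz]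
  have hminus : Wminus l a (Fin.last n0) = 0 := by
    rw [wminus_eq_stf l a (by omega), stf_last, hplus]
    ring
  rw [map_add]
  have e1 : ∀ (cond : Prop) [Decidable cond] (w : Fin (n0 + 1) → ℤ) (hw : IsPP w)
      (q : ℤ), w (Fin.last n0) = 0 →
      Phi (if cond then ((-1 : ℤ) ^ (a : ℕ)) •
        Finsupp.single ((⟨w, hw⟩ : ZPP (n0 + 1)), q) 1 else 0) = 0 := by
    intro cond _ w hw q hw0
    split_ifs with hcond
    · rw [map_smul, Phi_single]
      dsimp only
      rw [hw0]
      simp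
    · exact map_zero Phi
  rw [e1 _ _ _ _ hplus, e1 _ _ _ _ hminus, add_zero]

lemma mem_RSpan_of_phi {x : FSO n0} (h : Phi x = 0) : x ∈ RSpan n0 :=
  main_ker (x.support.sup fun k => wtf (k.1 : ZPP (n0 + 1)).1) x h
    (fun k hk => Finset.le_sup (f := fun k => wtf (k.1 : ZPP (n0 + 1)).1) hk)

end Assembly
/-- Theorem A(2): for `G = SO₀(2,2n)` (with `n = n0 + 2`) a highest weight
`(λ, p) ∈ ℤ^n_{++} × ℤ` is good if and only if `p = n` or `λ_n = 0`.  Here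
"good" means: for every `c ∈ ℤ` the alternating sum of the weights `W_i^±`
(over those Weyl group elements whose value `c_i^±` satisfies `(c_i^±)² = c²`)
lies in the `ℤ`-span of the restriction elements `r(λ', p')`, i.e. in the image
`Res(K⁰(K))` of the restriction map.  `0`-indexed, the Weyl group elements
`(δ_±, w^{(i)})`, `1 ≤ i ≤ n`, correspond to `a = i − 1 ∈ {0, …, n0+1}`; the
weight for `(δ_±, w^{(a+1)})` is `e_{(W^±_a, p ± λ_a ∓ a ...)}` as displayed, the
sign is `(−1)^{i−1} = (−1)^a`, and the values are `c_a^+ = −p + λ_a − a + 2n0 + 3`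
and `c_a^− = −p − λ_a + a + 1`. -/
theorem so_good_iff (n0 : ℕ) (l : Fin (n0 + 2) → ℤ) (hl : IsPP l) (p : ℤ) :
    (∀ c : ℤ,
      (∑ a : Fin (n0 + 2),
        ((if (-p + l a - (a : ℕ) + 2 * n0 + 3) ^ 2 = c ^ 2 then
            ((-1 : ℤ) ^ (a : ℕ)) •
              Finsupp.single ((⟨Wplus l a, isPP_Wplus hl a⟩ : ZPP (n0 + 1)),
                p + l a - (a : ℕ)) 1
          else 0) +
        (if (-p - l a + (a : ℕ) + 1) ^ 2 = c ^ 2 then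
            ((-1 : ℤ) ^ (a : ℕ)) •
              Finsupp.single ((⟨Wminus l a, isPP_Wminus hl a⟩ : ZPP (n0 + 1)),
                p - l a - 2 * n0 - 2 + (a : ℕ)) 1
          else 0)))
        ∈ Submodule.span ℤ
            {x : FSO n0 | ∃ (l' : Fin (n0 + 2) → ℤ) (p' : ℤ), IsPP l' ∧ x = rSO l' p'})
      ↔ (p = n0 + 2 ∨ l (Fin.last (n0 + 1)) = 0) := by
  constructor
  · -- goodness implies p = n or λ_n = 0
    intro hgood
    by_contra hcon
    push_neg at hcon
    obtain ⟨hp, hz⟩ := hcon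
    have h00 : (((0 : Fin (n0 + 2)) : ℕ) : ℤ) = 0 := by simp
    have hl0 : (0 : ℤ) ≤ l 0 := by
      have := hl 0 (Fin.last (n0 + 1)) (by rw [Fin.lt_def]; simp)
      exact le_trans (abs_nonneg _) this
    set c : ℤ := -p + l 0 + 2 * (n0 : ℤ) + 3 with hc
    have hphi : Phi (∑ a : Fin (n0 + 2),
        ((if (-p + l a - (a : ℕ) + 2 * n0 + 3) ^ 2 = c ^ 2 then
            ((-1 : ℤ) ^ (a : ℕ)) •
              Finsupp.single ((⟨Wplus l a, isPP_Wplus hl a⟩ : ZPP (n0 + 1)),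
                p + l a - (a : ℕ)) 1
          else 0) +
        (if (-p - l a + (a : ℕ) + 1) ^ 2 = c ^ 2 then
            ((-1 : ℤ) ^ (a : ℕ)) •
              Finsupp.single ((⟨Wminus l a, isPP_Wminus hl a⟩ : ZPP (n0 + 1)),
                p - l a - 2 * n0 - 2 + (a : ℕ)) 1
          else 0))) = 0 := Phi_RSpan (hgood c)
    set κ0 : (Fin (n0 + 1) → ℤ) × ZMod 2 :=
      (canf (Wplus l ((0 : Fin (n0 + 2)) : ℕ)),
        (((p + l 0 - (((0 : Fin (n0 + 2)) : ℕ) : ℤ)) : ℤ) : ZMod 2)) with hκ0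
    have heval : (Phi (∑ a : Fin (n0 + 2),
        ((if (-p + l a - (a : ℕ) + 2 * n0 + 3) ^ 2 = c ^ 2 then
            ((-1 : ℤ) ^ (a : ℕ)) •
              Finsupp.single ((⟨Wplus l a, isPP_Wplus hl a⟩ : ZPP (n0 + 1)),
                p + l a - (a : ℕ)) 1
          else 0) +
        (if (-p - l a + (a : ℕ) + 1) ^ 2 = c ^ 2 then
            ((-1 : ℤ) ^ (a : ℕ)) •
              Finsupp.single ((⟨Wminus l a, isPP_Wminus hl a⟩ : ZPP (n0 + 1)),
                p - l a - 2 * n0 - 2 + (a : ℕ)) 1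
          else 0)))) κ0 = 0 := by rw [hphi]; rfl
    rw [map_sum, Finsupp.finset_sum_apply] at heval
    rw [Finset.sum_eq_single_of_mem (0 : Fin (n0 + 2)) (Finset.mem_univ _) ?hside] at heval
    case hside =>
      intro b _ hb
      have hbv : ((b : ℕ) : ℤ) ≠ 0 := by
        intro hcc
        exact hb (Fin.ext (by simpa using hcc))
      have hkey : ∀ q : ℤ, ((canf (Wplus l (b : ℕ)), ((q : ℤ) : ZMod 2))) ≠ κ0 := by
        intro q hq
        have h1 := congrArg Prod.fst hq
        rw [hκ0] at h1
        dsimp only at h1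
        have h2 := canf_wplus_inj hl (by omega) (by simp) h1
        rw [Fin.val_zero] at h2
        exact hbv (by exact_mod_cast h2)
      have hK : canf (Wminus l (b : ℕ)) = canf (Wplus l (b : ℕ)) := by
        rw [wminus_eq_stf l (b : ℕ) (by omega), canf_stf]
      rw [map_add, Finsupp.add_apply]
      have e1 : ∀ (cond : Prop) [Decidable cond] (w : Fin (n0 + 1) → ℤ) (hw : IsPP w)
          (q : ℤ), canf w = canf (Wplus l (b : ℕ)) →
          (Phi (if cond then ((-1 : ℤ) ^ (b : ℕ)) •
            Finsupp.single ((⟨w, hw⟩ : ZPP (n0 + 1)), q) 1 else 0)) κ0 = 0 := by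
        intro cond _ w hw q hwc
        split_ifs with hcond
        · rw [map_smul, Phi_single]
          dsimp only
          rw [Finsupp.smul_apply, Finsupp.smul_apply, Finsupp.single_apply,
            if_neg (by rw [hwc]; exact hkey q)]
          simp
        · rw [map_zero]
          simp
      rw [e1 _ _ _ _ rfl, e1 _ _ _ _ hK, add_zero]
    · -- the a = 0 term
      rw [map_add, Finsupp.add_apply] at heval
      have hcond0 : (-p + l 0 - (((0 : Fin (n0 + 2)) : ℕ) : ℤ) + 2 * n0 + 3) ^ 2 = c ^ 2 := by
        rw [h00, hc]
        ring
      have hcond0' : ¬((-p - l 0 + (((0 : Fin (n0 + 2)) : ℕ) : ℤ) + 1) ^ 2 = c ^ 2) := by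
        rw [h00]
        intro hcc
        have hfac : (c - (-p - l 0 + 0 + 1)) * (c + (-p - l 0 + 0 + 1)) = 0 := by
          linear_combination -hcc
        rcases mul_eq_zero.mp hfac with h1 | h1 <;> rw [hc] at h1
        · omega
        · exact hp (by linarith)
      rw [if_pos hcond0, if_neg hcond0', map_zero, map_smul, Phi_single] at heval
      rw [Finsupp.smul_apply, Finsupp.smul_apply, Finsupp.single_apply] at heval
      rw [if_pos rfl] at heval
      have hwl : Wplus l ((0 : Fin (n0 + 2)) : ℕ) (Fin.last n0) = l (Fin.last (n0 + 1)) :=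
        wplus_last_le l _ (by simp)
      dsimp only at heval
      rw [hwl] at heval
      simp only [Fin.val_zero, pow_zero, one_mul, smul_eq_mul, mul_one,
        Finsupp.coe_zero, Pi.zero_apply, add_zero] at heval
      exact hz (Int.sign_eq_zero_iff_zero.mp heval)
  · -- p = n or λ_n = 0 implies goodness
    intro hgd c
    have hphi : Phi (∑ a : Fin (n0 + 2),
        ((if (-p + l a - (a : ℕ) + 2 * n0 + 3) ^ 2 = c ^ 2 then
            ((-1 : ℤ) ^ (a : ℕ)) •
              Finsupp.single ((⟨Wplus l a, isPP_Wplus hl a⟩ : ZPP (n0 + 1)),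
                p + l a - (a : ℕ)) 1
          else 0) +
        (if (-p - l a + (a : ℕ) + 1) ^ 2 = c ^ 2 then
            ((-1 : ℤ) ^ (a : ℕ)) •
              Finsupp.single ((⟨Wminus l a, isPP_Wminus hl a⟩ : ZPP (n0 + 1)),
                p - l a - 2 * n0 - 2 + (a : ℕ)) 1
          else 0))) = 0 := by
      rw [map_sum]
      refine Finset.sum_eq_zero fun a _ => ?_
      rcases hgd with hp | hz
      · refine phi_pair hl p c a ?_
        have he : (-p + l a - ((a : ℕ) : ℤ) + 2 * n0 + 3)
            = -(-p - l a + ((a : ℕ) : ℤ) + 1) := by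
          rw [hp]
          ring
        rw [he, neg_pow]
        norm_num
      · by_cases ha : (a : ℕ) ≤ n0
        · exact phi_term_zero hl hz p c a ha
        · have haa : a = Fin.last (n0 + 1) := Fin.ext (by
            have := a.isLt
            simp
            omega)
          refine phi_pair hl p c a ?_
          have hla : l a = 0 := by rw [haa]; exact hz
          have hav : ((a : ℕ) : ℤ) = (n0 : ℤ) + 1 := by rw [haa]; simp
          have he : (-p + l a - ((a : ℕ) : ℤ) + 2 * n0 + 3)
              = (-p - l a + ((a : ℕ) : ℤ) + 1) := by
            rw [hla, hav]
            ring
          rw [he]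
    exact mem_RSpan_of_phi hphi
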